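/- Let P be a semifield and consider a generalized seed mutation in direction k with ŷ_k = y_k ∏_i x_i^{b_{ik}} in the ambient field F. With x'_i defined by the generalized exchange relation (x'_k x_k = (∏_i x_i^{[-b_{ik}]_+})^{d_k} Z_k(ŷ_k)/Z_k|_P(y_k), x'_i = x_i for i ≠ k), y'_j defined by the generalized coefficient mutation, and B' = μ_k^D(B), the new hatted coefficients ŷ'_j = y'_j ∏_i (x'_i)^{b'_{ij}} satisfy: ŷ'_k = ŷ_k^{-1}, and for j ≠ k, ŷ'_j = ŷ_j (ŷ_k^{d_k})^{[b_{kj}]_+} Z_k(ŷ_k)^{-b_{kj}}. -/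

import Mathlib

private lemma exp_key (c a d b : ℤ) :
    max (-a) 0 * (d * -b) + (c + max a 0 * d * b + a * d * max (-b) 0)
      = c + a * (d * max b 0) := by
  have h1 : max a 0 = max (-a) 0 + a := by omega
  have h2 : max b 0 = max (-b) 0 + b := by omega
  rw [h1, h2]; ring


/-- The hatted coefficients `ŷⱼ = yⱼ ∏ᵢ xᵢ^{b_{ij}}` mutate like the
coefficients, but in the ambient field: `ŷ'_k = ŷ_k⁻¹` and, for `j ≠ k`,
`ŷ'_j = ŷ_j (ŷ_k^{d_k})^{[b_{kj}]₊} Z_k(ŷ_k)^{-b_{kj}}`.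
Here `Nk` plays the role of the normalization `Z_k|_P(y_k) ∈ P`. -/
theorem hatted_coefficient_mutation {n : ℕ} {F : Type*} [Field F]
    (x y : Fin n → F) (hx : ∀ i, x i ≠ 0) (hy : ∀ i, y i ≠ 0)
    (B : Matrix (Fin n) (Fin n) ℤ) (k : Fin n) (hBkk : B k k = 0)
    (dk : ℕ) (hdk : 0 < dk)
    (z : ℕ → F) (hz0 : z 0 = 1) (hzd : z dk = 1)
    (Nk : F) (hNk : Nk ≠ 0) :
    let pp : ℤ → ℤ := fun t => max t 0
    -- `Z_k(u) = Σ_{s=0}^{d_k} z_s u^s`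
    let Zev : F → F := fun u => ∑ s ∈ Finset.range (dk + 1), z s * u ^ s
    -- the hatted coefficients
    let yh : Fin n → F := fun j => y j * ∏ i, x i ^ (B i j)
    Zev (yh k) ≠ 0 →
    -- the generalized exchange relation
    let x' : Fin n → F := fun i => if i = k then
        ((∏ i, x i ^ pp (-(B i k))) ^ dk * Zev (yh k) / Nk) / x k
      else x i
    -- the generalized coefficient mutation (with `Z_k|_P(y_k) = Nk`)
    let y' : Fin n → F := fun j => if j = k then (y k)⁻¹
      else y j * y k ^ ((dk : ℤ) * pp (B k j)) * Nk ^ (-(B k j))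
    -- the mutated exchange matrix `μ_k^D(B)`
    let B' : Matrix (Fin n) (Fin n) ℤ := fun i j => if i = k ∨ j = k then -B i j
      else B i j + pp (B i k) * (dk : ℤ) * B k j + B i k * (dk : ℤ) * pp (-(B k j))
    -- the new hatted coefficients
    let yh' : Fin n → F := fun j => y' j * ∏ i, x' i ^ (B' i j)
    yh' k = (yh k)⁻¹ ∧
    ∀ j, j ≠ k →
      yh' j = yh j * yh k ^ ((dk : ℤ) * pp (B k j)) * Zev (yh k) ^ (-(B k j)) := by
  intro pp Zev yh hZ x' y' B' yh'
  have hyh' : ∀ j, yh' j = y' j * ∏ i, x' i ^ (B' i j) := fun _ => rfl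
  have hyh : ∀ j, yh j = y j * ∏ i, x i ^ (B i j) := fun _ => rfl
  have hx'k : x' k = ((∏ i, x i ^ pp (-(B i k))) ^ dk * Zev (yh k) / Nk) / x k :=
    if_pos rfl
  have hx'ne : ∀ i, i ≠ k → x' i = x i := fun i hi => if_neg hi
  have hB'k : ∀ i, B' i k = -B i k := fun i => if_pos (Or.inr rfl)
  constructor
  · -- part 1
    rw [hyh' k]
    have h1 : ∀ i ∈ Finset.univ, x' i ^ B' i k = (x i ^ B i k)⁻¹ := by
      intro i _
      rw [hB'k i]
      by_cases hi : i = k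
      · subst hi; rw [hBkk]; norm_num
      · rw [hx'ne i hi, zpow_neg]
    rw [Finset.prod_congr rfl h1, Finset.prod_inv_distrib, hyh k, mul_inv]
    congr 1
    exact if_pos rfl
  · -- part 2
    intro j hj
    have hjk : ¬ (j = k) := hj
    set b := B k j with hb
    set m : ℤ := (dk : ℤ) * pp b with hm
    set E := Finset.univ.erase k with hE
    -- the product ∏ x_i^{[-b_{ik}]_+} over all i equals that over i ≠ k
    have hQ : (∏ i, x i ^ pp (-(B i k))) = ∏ i ∈ E, x i ^ pp (-(B i k)) := by
      rw [← Finset.mul_prod_erase Finset.univ _ (Finset.mem_univ k), hBkk]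
      norm_num [pp]
      rfl
    have hB'kj : B' k j = -b := if_pos (Or.inl rfl)
    have hB'ij : ∀ i, i ≠ k →
        B' i j = B i j + pp (B i k) * (dk : ℤ) * b + B i k * (dk : ℤ) * pp (-b) := by
      intro i hi
      exact if_neg (by tauto)
    -- x' k ^ (-b)
    have hxk' : x' k ^ (-b)
        = (∏ i ∈ E, x i ^ (pp (-(B i k)) * ((dk : ℤ) * -b)))
            * Zev (yh k) ^ (-b) * Nk ^ b * x k ^ b := by
      rw [hx'k, div_zpow, div_zpow, mul_zpow, ← zpow_natCast (∏ i, x i ^ pp (-(B i k))) dk,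
        ← zpow_mul, hQ, zpow_neg Nk, zpow_neg (x k), div_inv_eq_mul, div_inv_eq_mul]
      have hh : (∏ i ∈ E, x i ^ pp (-(B i k))) ^ ((dk : ℤ) * -b)
          = ∏ i ∈ E, x i ^ (pp (-(B i k)) * ((dk : ℤ) * -b)) := by
        rw [← Finset.prod_zpow]
        exact Finset.prod_congr rfl fun i _ => (zpow_mul _ _ _).symm
      rw [hh]
    -- decompose the x'-product
    have hprod : (∏ i, x' i ^ (B' i j))
        = x' k ^ (-b) * ∏ i ∈ E, x i ^ (B i j + pp (B i k) * (dk : ℤ) * b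
            + B i k * (dk : ℤ) * pp (-b)) := by
      rw [← Finset.mul_prod_erase Finset.univ _ (Finset.mem_univ k), hB'kj]
      congr 1
      refine Finset.prod_congr rfl fun i hi => ?_
      have hik := (Finset.mem_erase.mp hi).1
      rw [hx'ne i hik, hB'ij i hik]
    -- merge the two E-products
    have hmerge : (∏ i ∈ E, x i ^ (pp (-(B i k)) * ((dk : ℤ) * -b)))
        * ∏ i ∈ E, x i ^ (B i j + pp (B i k) * (dk : ℤ) * b + B i k * (dk : ℤ) * pp (-b))
        = ∏ i ∈ E, x i ^ (B i j + B i k * m) := by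
      rw [← Finset.prod_mul_distrib]
      refine Finset.prod_congr rfl fun i hi => ?_
      rw [← zpow_add₀ (hx i), exp_key]
    -- left side in canonical form
    have hy'j : y' j = y j * y k ^ m * Nk ^ (-b) := if_neg hjk
    have hL : yh' j = y j * y k ^ m * Nk ^ (-b)
        * ((∏ i ∈ E, x i ^ (B i j + B i k * m)) * Zev (yh k) ^ (-b) * Nk ^ b * x k ^ b) := by
      rw [hyh' j, hy'j, hprod, hxk', ← hmerge]; ring
    -- right side in canonical form
    have hR : yh j * yh k ^ m * Zev (yh k) ^ (-b)
        = y j * y k ^ m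
          * ((∏ i ∈ E, x i ^ (B i j + B i k * m)) * Zev (yh k) ^ (-b) * x k ^ b) := by
      rw [hyh j, hyh k, mul_zpow, ← Finset.prod_zpow]
      have h1 : (∏ i, x i ^ (B i j)) = x k ^ b * ∏ i ∈ E, x i ^ (B i j) := by
        rw [← Finset.mul_prod_erase Finset.univ _ (Finset.mem_univ k), ← hb]
      have h2 : (∏ i, (x i ^ (B i k)) ^ m) = ∏ i ∈ E, x i ^ (B i k * m) := by
        rw [← Finset.mul_prod_erase Finset.univ _ (Finset.mem_univ k), hBkk]
        norm_num
        exact Finset.prod_congr rfl fun i _ => by rw [← zpow_mul]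
      rw [h1, h2]
      have h3 : (∏ i ∈ E, x i ^ (B i j)) * ∏ i ∈ E, x i ^ (B i k * m)
          = ∏ i ∈ E, x i ^ (B i j + B i k * m) := by
        rw [← Finset.prod_mul_distrib]
        exact Finset.prod_congr rfl fun i _ => by rw [← zpow_add₀ (hx i)]
      rw [← h3]; ring
    rw [hL, hR]
    have hNN : Nk ^ (-b) * Nk ^ b = 1 := by
      rw [← zpow_add₀ hNk]; simp
    linear_combination (y j * y k ^ m
      * ((∏ i ∈ E, x i ^ (B i j + B i k * m)) * Zev (yh k) ^ (-b) * x k ^ b)) * hNN
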